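/- Let V be a finite-dimensional module over the group algebra kG of a finite group G, k a field. Then V is a projective kG-module if and only if there exists u ∈ End_k(V) such that ∑_{g∈G} ρ(g) ∘ u ∘ ρ(g)⁻¹ = Id_V, where ρ is the action of G on V. -/

import Mathlib

open TensorProduct

namespace Higman15

set_option linter.unusedSectionVars false

variable {k G V : Type*} [Field k] [Group G] [Fintype G]
  [AddCommGroup V] [Module k V] (ρ : Representation k G V)

lemma smul_def (r : MonoidAlgebra k G) (x : ρ.asModule) :
    r • x = ρ.asAlgebraHom r x := rfl

instance : SMulCommClass k (MonoidAlgebra k G) ρ.asModule :=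
  ⟨fun r a x => by
    change r • (ρ.asAlgebraHom a x) = ρ.asAlgebraHom a (r • x)
    exact ((ρ.asAlgebraHom a).map_smul r x).symm⟩

instance : IsScalarTower k (MonoidAlgebra k G) ρ.asModule :=
  ⟨fun r a x => by
    change ρ.asAlgebraHom (r • a) x = r • ρ.asAlgebraHom a x
    rw [map_smul]; rfl⟩

lemma of_smul (g : G) (x : ρ.asModule) :
    MonoidAlgebra.of k G g • x = ρ g x := by
  rw [smul_def, Representation.asAlgebraHom_of]

/-- The multiplication bilinear map `A →ₗ[A] (M →ₗ[k] M)`. -/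
noncomputable def mulMap : MonoidAlgebra k G →ₗ[MonoidAlgebra k G]
    (ρ.asModule →ₗ[k] ρ.asModule) where
  toFun a :=
    { toFun := fun x => a • x
      map_add' := fun x y => smul_add a x y
      map_smul' := fun r x => (smul_comm r a x).symm }
  map_add' a b := by ext x; exact add_smul a b x
  map_smul' c a := by ext x; exact mul_smul c a x

/-- The canonical `A`-linear surjection `A ⊗[k] M → M`. -/
noncomputable def pi : (MonoidAlgebra k G) ⊗[k] ρ.asModule →ₗ[MonoidAlgebra k G] ρ.asModule :=
  TensorProduct.AlgebraTensorModule.lift (mulMap ρ)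

@[simp] lemma pi_tmul (a : MonoidAlgebra k G) (x : ρ.asModule) :
    pi ρ (a ⊗ₜ x) = a • x := rfl

lemma asAlgebraHom_eq_sum (a : MonoidAlgebra k G) (x : V) :
    ρ.asAlgebraHom a x = ∑ g : G, a.coeff g • ρ g x := by
  conv_lhs => rw [← MonoidAlgebra.sum_coeff_single a]
  rw [Finsupp.sum_fintype _ _ (fun g => MonoidAlgebra.single_zero g)]
  rw [map_sum]
  simp [Representation.asAlgebraHom_single]

end Higman15

open Higman15 in
theorem stmt15 (k : Type*) [Field k] (G : Type*) [Group G] [Fintype G]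
    (V : Type*) [AddCommGroup V] [Module k V] [FiniteDimensional k V]
    (ρ : Representation k G V) :
    Module.Projective (MonoidAlgebra k G) ρ.asModule ↔
      ∃ u : V →ₗ[k] V, ∑ g : G, (ρ g) ∘ₗ u ∘ₗ (ρ g⁻¹) = LinearMap.id := by
  haveI : Module.Free k ρ.asModule := inferInstanceAs (Module.Free k V)
  haveI : Module.Free (MonoidAlgebra k G) ((MonoidAlgebra k G) ⊗[k] ρ.asModule) :=
    Module.Free.of_basis
      (Algebra.TensorProduct.basis (MonoidAlgebra k G) (Module.Free.chooseBasis k ρ.asModule))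
  constructor
  · intro hproj
    have hsurj : Function.Surjective (pi ρ) := fun x => ⟨(1 : MonoidAlgebra k G) ⊗ₜ x, by simp⟩
    obtain ⟨s, hs⟩ := Module.projective_lifting_property (pi ρ) LinearMap.id hsurj
    -- coefficient-at-1 extraction
    let B : MonoidAlgebra k G →ₗ[k] (ρ.asModule →ₗ[k] ρ.asModule) :=
      ((Finsupp.lapply (1 : G)) ∘ₗ (MonoidAlgebra.coeffLinearEquiv k).toLinearMap).smulRight (LinearMap.id (R := k) (M := ρ.asModule))
    let φ : (MonoidAlgebra k G) ⊗[k] ρ.asModule →ₗ[k] ρ.asModule := TensorProduct.lift B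
    refine ⟨φ ∘ₗ (s.restrictScalars k), ?_⟩
    ext v
    have key : ∀ t : (MonoidAlgebra k G) ⊗[k] ρ.asModule,
        ∑ g : G, ρ g (φ (MonoidAlgebra.of k G g⁻¹ • t)) = pi ρ t := by
      intro t
      induction t using TensorProduct.induction_on with
      | zero =>
        simp
        exact Finset.sum_eq_zero fun g _ => (ρ g).map_zero
      | tmul a x =>
        have h1 : ∀ g : G, (MonoidAlgebra.of k G g⁻¹ • (a ⊗ₜ[k] x) :
            (MonoidAlgebra k G) ⊗[k] ρ.asModule)
            = (MonoidAlgebra.of k G g⁻¹ * a) ⊗ₜ[k] x := fun _ => rfl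
        have h2 : ∀ g : G, φ ((MonoidAlgebra.of k G g⁻¹ * a) ⊗ₜ[k] x) = a.coeff g • x := by
          intro g
          simp only [φ, B, TensorProduct.lift.tmul, LinearMap.smulRight_apply,
            LinearMap.smul_apply, LinearMap.id_apply, MonoidAlgebra.of_apply]
          congr 1
          show (MonoidAlgebra.single g⁻¹ (1 : k) * a).coeff 1 = a.coeff g
          rw [MonoidAlgebra.coeff_single_mul_apply, one_mul, inv_inv, mul_one]
        simp only [h1, h2, map_smul]
        rw [pi_tmul, smul_def]
        exact Eq.trans (Finset.sum_congr rfl fun g _ => (ρ g).map_smul _ _) (asAlgebraHom_eq_sum ρ a x).symm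
      | add t₁ t₂ h₁ h₂ =>
        simp only [smul_add, map_add, Finset.sum_add_distrib, h₁, h₂]
        rw [← h₁, ← h₂]
        exact (Finset.sum_congr rfl fun g _ => (ρ g).map_add _ _).trans Finset.sum_add_distrib
    simp only [LinearMap.sum_apply, LinearMap.comp_apply, LinearMap.id_apply,
      LinearMap.coe_restrictScalars]
    calc ∑ g : G, ρ g (φ (s (ρ g⁻¹ v)))
        = ∑ g : G, ρ g (φ (MonoidAlgebra.of k G g⁻¹ • s v)) := by
          refine Finset.sum_congr rfl fun g _ => ?_
          rw [← of_smul ρ g⁻¹ v]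
          exact congrArg (fun t => ρ g (φ t)) (s.map_smul _ _)
      _ = ρ.asModuleEquiv (pi ρ (s v)) := key (s v)
      _ = v := congrArg ρ.asModuleEquiv (LinearMap.congr_fun hs v)
  · rintro ⟨u, hu⟩
    -- the section
    let s₀ : ρ.asModule →ₗ[k] (MonoidAlgebra k G) ⊗[k] ρ.asModule :=
      ∑ g : G, (TensorProduct.mk k (MonoidAlgebra k G) ρ.asModule (MonoidAlgebra.of k G g)) ∘ₗ
        ((u ∘ₗ ρ g⁻¹ : V →ₗ[k] V) : ρ.asModule →ₗ[k] ρ.asModule)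
    have s₀_apply : ∀ x : ρ.asModule, s₀ x =
        ∑ g : G, MonoidAlgebra.of k G g ⊗ₜ[k] (u (ρ g⁻¹ x) : ρ.asModule) := by
      intro x
      simp only [s₀, LinearMap.sum_apply, LinearMap.comp_apply, TensorProduct.mk_apply]
      rfl
    have hof : ∀ (h : G) (x : ρ.asModule), s₀ (MonoidAlgebra.of k G h • x)
        = MonoidAlgebra.of k G h • s₀ x := by
      intro h x
      rw [of_smul]
      refine (s₀_apply _).trans ?_
      rw [s₀_apply]
      refine (Fintype.sum_equiv (Equiv.mulLeft h⁻¹) _ _ fun g => ?_).trans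
        (Finset.smul_sum (r := MonoidAlgebra.of k G h) (N := MonoidAlgebra k G ⊗[k] ρ.asModule)).symm
      have h1 : MonoidAlgebra.of k G h • (MonoidAlgebra.of k G (h⁻¹ * g) ⊗ₜ[k]
          (u (ρ (h⁻¹ * g)⁻¹ x) : ρ.asModule) : (MonoidAlgebra k G) ⊗[k] ρ.asModule)
          = (MonoidAlgebra.of k G h * MonoidAlgebra.of k G (h⁻¹ * g)) ⊗ₜ[k]
            (u (ρ (h⁻¹ * g)⁻¹ x) : ρ.asModule) := rfl
      refine Eq.trans ?_ h1.symm
      congr 1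
      · rw [← map_mul, mul_inv_cancel_left]
      · rw [mul_inv_rev, inv_inv, map_mul]
        rfl
    have hsmul : ∀ (r : MonoidAlgebra k G) (x : ρ.asModule), s₀ (r • x) = r • s₀ x := by
      intro r x
      induction r using MonoidAlgebra.induction_linear with
      | zero => simp
      | add f g hf hg => rw [add_smul, add_smul, map_add, hf, hg]
      | single g c =>
        have h2 : (MonoidAlgebra.single g c : MonoidAlgebra k G) = c • MonoidAlgebra.of k G g := by
          simp [MonoidAlgebra.of_apply, Finsupp.smul_single]
        rw [h2, smul_assoc, map_smul, hof, smul_assoc]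
    let s : ρ.asModule →ₗ[MonoidAlgebra k G] (MonoidAlgebra k G) ⊗[k] ρ.asModule :=
      { toFun := s₀
        map_add' := map_add s₀
        map_smul' := hsmul }
    refine Module.Projective.of_split s (pi ρ) ?_
    ext x
    simp only [LinearMap.comp_apply, LinearMap.id_apply, LinearMap.coe_mk, AddHom.coe_mk]
    show pi ρ (s₀ x) = x
    rw [s₀_apply]
    erw [map_sum]
    have h3 : ∀ g : G, pi ρ ((MonoidAlgebra.of k G g) ⊗ₜ[k] (u (ρ g⁻¹ x) : ρ.asModule))
        = ρ g (u (ρ g⁻¹ x)) := fun g => of_smul ρ g _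
    erw [Finset.sum_congr rfl fun g _ => h3 g]
    have h4 := congrArg (fun f : V →ₗ[k] V => f x) hu
    exact (LinearMap.sum_apply _ _ _).symm.trans h4
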